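/- The DAG D^k_A on a 2×n array A with distinct entries has at most 6kn nodes; in particular, for each fixed position (α, β) in A, the number of non-leaf nodes p of D^k_A whose k-th largest element is located at (α, β) is at most k. -/

import Mathlib

/-- `InRange a b p` : `p` is a position of a 2-row array lying in columns `a..b`. -/
def InRange (a b : ℕ) (p : ℕ × ℕ) : Prop :=
  (p.1 = 1 ∨ p.1 = 2) ∧ a ≤ p.2 ∧ p.2 ≤ b

/-- The set of positions of the `min(k, 2(b-a+1))` largest values of `A` restricted to
columns `a..b`: those positions in range dominated by fewer than `k` in-range values. -/
def TopkSet (A : ℕ → ℕ → ℝ) (k a b : ℕ) : Set (ℕ × ℕ) :=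
  {p | InRange a b p ∧ {q | InRange a b q ∧ A p.1 p.2 < A q.1 q.2}.ncard < k}

/-- The leftmost column among the answers of the Top-k query on columns `a..b`. -/
noncomputable def leftCol (A : ℕ → ℕ → ℝ) (k a b : ℕ) : ℕ :=
  sInf {c | ∃ r, (r, c) ∈ TopkSet A k a b}

/-- The rightmost column among the answers of the Top-k query on columns `a..b`. -/
noncomputable def rightCol (A : ℕ → ℕ → ℝ) (k a b : ℕ) : ℕ :=
  sSup {c | ∃ r, (r, c) ∈ TopkSet A k a b}

/-- `IsChild A k q p` : `q` is a non-leaf node (interval) and `p` is its left or right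
child in the DAG `D^k_A`. -/
def IsChild (A : ℕ → ℕ → ℝ) (k : ℕ) (q p : ℕ × ℕ) : Prop :=
  k < 2 * (q.2 - q.1 + 1) ∧
    ((p = (q.1, rightCol A k q.1 q.2 - 1) ∧ q.1 < rightCol A k q.1 q.2) ∨
     (p = (leftCol A k q.1 q.2 + 1, q.2) ∧ leftCol A k q.1 q.2 < q.2))

/-- The nodes of the DAG `D^k_A` on a `2 × n` array: the root is `[1, n]`, and the
children of a non-leaf node are as prescribed by `IsChild`. -/
inductive IsNode (A : ℕ → ℕ → ℝ) (k n : ℕ) : ℕ × ℕ → Prop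
  | root : IsNode A k n (1, n)
  | child {q p : ℕ × ℕ} : IsNode A k n q → IsChild A k q p → IsNode A k n p

/-- `p` is a descendant of `q` in the DAG `D^k_A`. -/
def Descendant (A : ℕ → ℕ → ℝ) (k : ℕ) (p q : ℕ × ℕ) : Prop :=
  Relation.TransGen (fun x y => IsChild A k y x) p q

/-- All entries of the `2 × n` array `A` are pairwise distinct. -/
def DistinctEntries (A : ℕ → ℕ → ℝ) (n : ℕ) : Prop :=
  Set.InjOn (fun p : ℕ × ℕ => A p.1 p.2) {p | InRange 1 n p}

lemma finite_inrange (a b : ℕ) (P : ℕ × ℕ → Prop) :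
    {q : ℕ × ℕ | InRange a b q ∧ P q}.Finite := by
  apply Set.Finite.subset (Set.finite_Icc ((1 : ℕ), a) ((2 : ℕ), b))
  rintro ⟨r, c⟩ ⟨⟨hr, hc1, hc2⟩, -⟩
  simp only [Set.mem_Icc, Prod.le_def]
  omega

lemma finite_inrange' (a b : ℕ) : {q : ℕ × ℕ | InRange a b q}.Finite := by
  have := finite_inrange a b (fun _ => True)
  simpa using this

lemma topk_nonempty (A : ℕ → ℕ → ℝ) {k a b : ℕ} (hab : a ≤ b) (hk : 1 ≤ k) :
    ∃ p, p ∈ TopkSet A k a b := by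
  have hne : ({q : ℕ × ℕ | InRange a b q}).Nonempty := ⟨(1, a), Or.inl rfl, le_refl a, hab⟩
  obtain ⟨p, hp, hmax⟩ := Set.Finite.exists_maximalFor (fun q : ℕ × ℕ => A q.1 q.2)
    _ (finite_inrange' a b) hne
  refine ⟨p, hp, ?_⟩
  have : {q : ℕ × ℕ | InRange a b q ∧ A p.1 p.2 < A q.1 q.2} = ∅ := by
    ext q
    simp only [Set.mem_setOf_eq, Set.mem_empty_iff_false, iff_false, not_and, not_lt]
    intro hq
    by_contra h
    push_neg at h
    exact absurd (hmax hq h.le) (not_le.mpr h)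
  rw [this]
  rw [Set.ncard_empty]
  omega

lemma col_facts (A : ℕ → ℕ → ℝ) {k a b : ℕ} (hab : a ≤ b) (hk : 1 ≤ k) :
    (∃ r, (r, leftCol A k a b) ∈ TopkSet A k a b) ∧
    (∃ r, (r, rightCol A k a b) ∈ TopkSet A k a b) ∧
    a ≤ leftCol A k a b ∧ leftCol A k a b ≤ rightCol A k a b ∧ rightCol A k a b ≤ b := by
  set C := {c | ∃ r, (r, c) ∈ TopkSet A k a b} with hC
  obtain ⟨p, hp⟩ := topk_nonempty A hab hk
  have hCne : C.Nonempty := ⟨p.2, p.1, by simpa using hp⟩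
  have hbdd : BddAbove C := by
    refine ⟨b, fun c hc => ?_⟩
    obtain ⟨r, hr⟩ := hc
    exact hr.1.2.2
  have hmemInf : leftCol A k a b ∈ C := Nat.sInf_mem hCne
  have hmemSup : rightCol A k a b ∈ C := Nat.sSup_mem hCne hbdd
  refine ⟨hmemInf, hmemSup, ?_, ?_, ?_⟩
  · obtain ⟨r, hr⟩ := hmemInf; exact hr.1.2.1
  · obtain ⟨c, hc⟩ := hCne
    exact le_trans (Nat.sInf_le hc) (le_csSup hbdd hc)
  · obtain ⟨r, hr⟩ := hmemSup; exact hr.1.2.2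

def NodeInv (A : ℕ → ℕ → ℝ) (n k : ℕ) (p : ℕ × ℕ) : Prop :=
  1 ≤ p.1 ∧ p.1 ≤ p.2 ∧ p.2 ≤ n ∧
  (p.1 = 1 ∨ ∃ r, (r = 1 ∨ r = 2) ∧
    {q | InRange p.1 p.2 q ∧ A r (p.1 - 1) < A q.1 q.2}.ncard < k) ∧
  (p.2 = n ∨ ∃ r, (r = 1 ∨ r = 2) ∧
    {q | InRange p.1 p.2 q ∧ A r (p.2 + 1) < A q.1 q.2}.ncard < k)

lemma ncard_mono {a b a' b' : ℕ} (ha : a' ≤ a) (hb : b ≤ b') (f : ℕ × ℕ → ℝ) (x : ℝ) :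
    {q | InRange a b q ∧ x < f q}.ncard ≤ {q | InRange a' b' q ∧ x < f q}.ncard := by
  apply Set.ncard_le_ncard _ (finite_inrange a' b' _)
  rintro q ⟨⟨h1, h2, h3⟩, h4⟩
  exact ⟨⟨h1, le_trans ha h2, le_trans h3 hb⟩, h4⟩

lemma isNode_inv {A : ℕ → ℕ → ℝ} {n k : ℕ} (hn : 1 ≤ n) (hk : 1 ≤ k) {p : ℕ × ℕ}
    (h : IsNode A k n p) : NodeInv A n k p := by
  induction h with
  | root => exact ⟨le_refl 1, hn, le_refl n, Or.inl rfl, Or.inl rfl⟩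
  | @child q p hq hc ih =>
    obtain ⟨h1, h2, h3, hL, hR⟩ := ih
    obtain ⟨⟨rl, hrl⟩, ⟨rr, hrr⟩, hlc1, hlc2, hrc2⟩ := col_facts A h2 hk
    rcases hc.2 with ⟨hp, hlt⟩ | ⟨hp, hlt⟩
    · subst hp
      refine ⟨h1, by simpa using Nat.le_sub_one_of_lt hlt, by simp; omega, ?_, ?_⟩
      · simp only
        rcases hL with h | ⟨r, hr, hcnt⟩
        · exact Or.inl h
        · exact Or.inr ⟨r, hr, lt_of_le_of_lt
            (ncard_mono (le_refl _) (by omega) _ _) hcnt⟩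
      · refine Or.inr ⟨rr, ?_, ?_⟩
        · exact hrr.1.1
        · simp only
          have : rightCol A k q.1 q.2 - 1 + 1 = rightCol A k q.1 q.2 := by omega
          rw [this]
          exact lt_of_le_of_lt (ncard_mono (le_refl _) (by omega) _ _) hrr.2
    · subst hp
      refine ⟨by simp, by simpa using hlt, h3, ?_, ?_⟩
      · refine Or.inr ⟨rl, hrl.1.1, ?_⟩
        simp only [Nat.add_sub_cancel]
        exact lt_of_le_of_lt (ncard_mono (by omega) (le_refl _) _ _) hrl.2
      · simp only
        rcases hR with h | ⟨r, hr, hcnt⟩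
        · exact Or.inl h
        · exact Or.inr ⟨r, hr, lt_of_le_of_lt (ncard_mono (by omega) (le_refl _) _ _) hcnt⟩

lemma boundary_gt {A : ℕ → ℕ → ℝ} {n k : ℕ} (hA : DistinctEntries A n) (hk : 1 ≤ k)
    {a b α β : ℕ} (hinv : NodeInv A n k (a, b)) (hin : InRange a b (α, β))
    (hcnt : {q | InRange a b q ∧ A α β < A q.1 q.2}.ncard = k - 1) :
    (a = 1 ∨ ∃ r, (r = 1 ∨ r = 2) ∧ A α β < A r (a - 1)) ∧
    (b = n ∨ ∃ r, (r = 1 ∨ r = 2) ∧ A α β < A r (b + 1)) := by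
  obtain ⟨h1, h2, h3, hL, hR⟩ := hinv
  simp only at h1 h2 h3 hL hR
  obtain ⟨hα, hβ1, hβ2⟩ := hin
  simp only at hα hβ1 hβ2
  constructor
  · rcases eq_or_ne a 1 with h | h
    · exact Or.inl h
    · rcases hL with h' | ⟨r, hr, hc⟩
      · exact Or.inl h'
      refine Or.inr ⟨r, hr, ?_⟩
      have hne : A r (a - 1) ≠ A α β := by
        intro he
        have := hA (show (r, a - 1) ∈ {p : ℕ × ℕ | InRange 1 n p} from ⟨hr, by omega, by omega⟩)
          (show (α, β) ∈ {p : ℕ × ℕ | InRange 1 n p} from ⟨hα, by omega, by omega⟩) he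
        have : a - 1 = β := congrArg Prod.snd this
        omega
      by_contra hcon
      push_neg at hcon
      have hlt : A r (a - 1) < A α β := lt_of_le_of_ne hcon hne
      have hnm : (α, β) ∉ {q : ℕ × ℕ | InRange a b q ∧ A α β < A q.1 q.2} :=
        fun hmem => lt_irrefl _ hmem.2
      have hsub : insert (α, β) {q : ℕ × ℕ | InRange a b q ∧ A α β < A q.1 q.2} ⊆
          {q : ℕ × ℕ | InRange a b q ∧ A r (a - 1) < A q.1 q.2} := by
        rintro q (hq | ⟨hq1, hq2⟩)
        · subst hq; exact ⟨⟨hα, hβ1, hβ2⟩, hlt⟩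
        · exact ⟨hq1, lt_trans hlt hq2⟩
      have := Set.ncard_le_ncard hsub (finite_inrange a b _)
      rw [Set.ncard_insert_of_notMem hnm (finite_inrange a b _), hcnt,
        Nat.sub_add_cancel hk] at this
      exact absurd hc (not_lt.mpr this)
  · rcases eq_or_ne b n with h | h
    · exact Or.inl h
    · rcases hR with h' | ⟨r, hr, hc⟩
      · exact Or.inl h'
      refine Or.inr ⟨r, hr, ?_⟩
      have hne : A r (b + 1) ≠ A α β := by
        intro he
        have := hA (show (r, b + 1) ∈ {p : ℕ × ℕ | InRange 1 n p} from ⟨hr, by omega, by omega⟩)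
          (show (α, β) ∈ {p : ℕ × ℕ | InRange 1 n p} from ⟨hα, by omega, by omega⟩) he
        have : b + 1 = β := congrArg Prod.snd this
        omega
      by_contra hcon
      push_neg at hcon
      have hlt : A r (b + 1) < A α β := lt_of_le_of_ne hcon hne
      have hnm : (α, β) ∉ {q : ℕ × ℕ | InRange a b q ∧ A α β < A q.1 q.2} :=
        fun hmem => lt_irrefl _ hmem.2
      have hsub : insert (α, β) {q : ℕ × ℕ | InRange a b q ∧ A α β < A q.1 q.2} ⊆
          {q : ℕ × ℕ | InRange a b q ∧ A r (b + 1) < A q.1 q.2} := by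
        rintro q (hq | ⟨hq1, hq2⟩)
        · subst hq; exact ⟨⟨hα, hβ1, hβ2⟩, hlt⟩
        · exact ⟨hq1, lt_trans hlt hq2⟩
      have := Set.ncard_le_ncard hsub (finite_inrange a b _)
      rw [Set.ncard_insert_of_notMem hnm (finite_inrange a b _), hcnt,
        Nat.sub_add_cancel hk] at this
      exact absurd hc (not_lt.mpr this)

def TopPos (A : ℕ → ℕ → ℝ) (n k α β : ℕ) : Set (ℕ × ℕ) :=
  {p : ℕ × ℕ | IsNode A k n p ∧ k < 2 * (p.2 - p.1 + 1) ∧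
    InRange p.1 p.2 (α, β) ∧
    {q | InRange p.1 p.2 q ∧ A α β < A q.1 q.2}.ncard = k - 1}

noncomputable def FF (A : ℕ → ℕ → ℝ) (α β : ℕ) (p : ℕ × ℕ) : ℕ :=
  {q | InRange p.1 β q ∧ A α β < A q.1 q.2}.ncard

noncomputable def GG (A : ℕ → ℕ → ℝ) (α β : ℕ) (p : ℕ × ℕ) : ℕ :=
  {q | InRange (β + 1) p.2 q ∧ A α β < A q.1 q.2}.ncard

lemma FF_lt {A : ℕ → ℕ → ℝ} {n k α β : ℕ} (hk : 1 ≤ k) {p : ℕ × ℕ}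
    (hp : p ∈ TopPos A n k α β) : FF A α β p < k := by
  obtain ⟨-, -, ⟨-, -, hβ⟩, hcnt⟩ := hp
  have : FF A α β p ≤ k - 1 := by
    rw [← hcnt]
    exact ncard_mono (le_refl _) hβ _ _
  omega

lemma FF_add_GG {A : ℕ → ℕ → ℝ} {n k α β : ℕ} {p : ℕ × ℕ}
    (hp : p ∈ TopPos A n k α β) : FF A α β p + GG A α β p = k - 1 := by
  obtain ⟨-, -, ⟨-, hβ1, hβ2⟩, hcnt⟩ := hp
  rw [← hcnt, FF, GG]
  rw [← Set.ncard_union_eq ?disj (finite_inrange _ _ _) (finite_inrange _ _ _)]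
  · congr 1
    ext q
    simp only [Set.mem_union, Set.mem_setOf_eq, InRange]
    constructor
    · rintro (⟨⟨h1, h2, h3⟩, h4⟩ | ⟨⟨h1, h2, h3⟩, h4⟩)
      · exact ⟨⟨h1, h2, le_trans h3 hβ2⟩, h4⟩
      · exact ⟨⟨h1, le_trans hβ1 (by omega), h3⟩, h4⟩
    · rintro ⟨⟨h1, h2, h3⟩, h4⟩
      rcases le_or_gt q.2 β with h | h
      · exact Or.inl ⟨⟨h1, h2, h⟩, h4⟩
      · exact Or.inr ⟨⟨h1, h, h3⟩, h4⟩
  case disj =>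
    rw [Set.disjoint_left]
    rintro q ⟨⟨-, -, h3⟩, -⟩ ⟨⟨-, h2, -⟩, -⟩
    omega

lemma FF_strict {A : ℕ → ℕ → ℝ} {n k : ℕ} (hA : DistinctEntries A n) (hn : 1 ≤ n)
    (hk : 1 ≤ k) {α β : ℕ} {p p' : ℕ × ℕ} (hp : p ∈ TopPos A n k α β)
    (hp' : p' ∈ TopPos A n k α β) (hlt : p.1 < p'.1) : FF A α β p' < FF A α β p := by
  obtain ⟨hnode', -, hin', hcnt'⟩ := hp'
  have hinv' := isNode_inv hn hk hnode'
  obtain ⟨hbd, -⟩ := boundary_gt hA hk (by exact hinv') (by exact hin') (by exact hcnt')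
  rcases hbd with h | ⟨r, hr, hgt⟩
  · have := (isNode_inv hn hk hp.1).1; omega
  · have hβ' : p'.1 ≤ β := hin'.2.1
    have hnm : (r, p'.1 - 1) ∉ {q : ℕ × ℕ | InRange p'.1 β q ∧ A α β < A q.1 q.2} := by
      rintro ⟨⟨-, h2, -⟩, -⟩
      simp only at h2
      omega
    have hsub : insert (r, p'.1 - 1) {q : ℕ × ℕ | InRange p'.1 β q ∧ A α β < A q.1 q.2} ⊆
        {q : ℕ × ℕ | InRange p.1 β q ∧ A α β < A q.1 q.2} := by
      rintro q (hq | ⟨⟨h1, h2, h3⟩, h4⟩)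
      · subst hq
        exact ⟨⟨hr, by omega, by omega⟩, hgt⟩
      · exact ⟨⟨h1, by omega, h3⟩, h4⟩
    have := Set.ncard_le_ncard hsub (finite_inrange _ _ _)
    rw [Set.ncard_insert_of_notMem hnm (finite_inrange _ _ _)] at this
    have h2 : FF A α β p' + 1 ≤ FF A α β p := this
    omega

lemma GG_strict {A : ℕ → ℕ → ℝ} {n k : ℕ} (hA : DistinctEntries A n) (hn : 1 ≤ n)
    (hk : 1 ≤ k) {α β : ℕ} {p p' : ℕ × ℕ} (hp : p ∈ TopPos A n k α β)
    (hp' : p' ∈ TopPos A n k α β) (hlt : p.2 < p'.2) : GG A α β p < GG A α β p' := by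
  obtain ⟨hnode, -, hin, hcnt⟩ := hp
  have hinv := isNode_inv hn hk hnode
  have hb'n : p'.2 ≤ n := (isNode_inv hn hk hp'.1).2.2.1
  obtain ⟨-, hbd⟩ := boundary_gt hA hk (by exact hinv) (by exact hin) (by exact hcnt)
  rcases hbd with h | ⟨r, hr, hgt⟩
  · omega
  · have hβ : β ≤ p.2 := hin.2.2
    have hnm : (r, p.2 + 1) ∉ {q : ℕ × ℕ | InRange (β + 1) p.2 q ∧ A α β < A q.1 q.2} := by
      rintro ⟨⟨-, -, h3⟩, -⟩
      simp only at h3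
      omega
    have hsub : insert (r, p.2 + 1) {q : ℕ × ℕ | InRange (β + 1) p.2 q ∧ A α β < A q.1 q.2} ⊆
        {q : ℕ × ℕ | InRange (β + 1) p'.2 q ∧ A α β < A q.1 q.2} := by
      rintro q (hq | ⟨⟨h1, h2, h3⟩, h4⟩)
      · subst hq
        exact ⟨⟨hr, by omega, by omega⟩, hgt⟩
      · exact ⟨⟨h1, h2, by omega⟩, h4⟩
    have := Set.ncard_le_ncard hsub (finite_inrange _ _ _)
    rw [Set.ncard_insert_of_notMem hnm (finite_inrange _ _ _)] at this
    have h2 : GG A α β p + 1 ≤ GG A α β p' := this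
    omega

lemma FF_injOn {A : ℕ → ℕ → ℝ} {n k : ℕ} (hA : DistinctEntries A n) (hn : 1 ≤ n)
    (hk : 1 ≤ k) (α β : ℕ) : Set.InjOn (FF A α β) (TopPos A n k α β) := by
  intro p hp p' hp' heq
  have ha : p.1 = p'.1 := by
    rcases lt_trichotomy p.1 p'.1 with h | h | h
    · exact absurd heq (by have := FF_strict hA hn hk hp hp' h; omega)
    · exact h
    · exact absurd heq (by have := FF_strict hA hn hk hp' hp h; omega)
  have hg : GG A α β p = GG A α β p' := by
    have h1 := FF_add_GG hp
    have h2 := FF_add_GG hp'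
    omega
  have hb : p.2 = p'.2 := by
    rcases lt_trichotomy p.2 p'.2 with h | h | h
    · exact absurd hg (by have := GG_strict hA hn hk hp hp' h; omega)
    · exact h
    · exact absurd hg (by have := GG_strict hA hn hk hp' hp h; omega)
  exact Prod.ext ha hb

lemma part2 {A : ℕ → ℕ → ℝ} {n k : ℕ} (hA : DistinctEntries A n) (hn : 1 ≤ n)
    (hk : 1 ≤ k) (α β : ℕ) : (TopPos A n k α β).ncard ≤ k := by
  have := Set.ncard_le_ncard_of_injOn (FF A α β)
    (fun p hp => Finset.mem_coe.mpr (Finset.mem_range.mpr (FF_lt hk hp)))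
    (FF_injOn hA hn hk α β) (Finset.range k).finite_toSet
  rwa [Set.ncard_coe_finset, Finset.card_range] at this

lemma exists_rank (f : ℕ × ℕ → ℝ) (k : ℕ) (hk : 1 ≤ k) :
    ∀ s : Finset (ℕ × ℕ), Set.InjOn f s → k ≤ s.card →
      ∃ x ∈ s, (s.filter fun y => f x < f y).card = k - 1 := by
  induction k with
  | zero => omega
  | succ k ih =>
    intro s hinj hcard
    have hne : s.Nonempty := Finset.card_pos.mp (by omega)
    obtain ⟨x, hx, hmax⟩ := s.exists_max_image f hne
    rcases Nat.eq_zero_or_pos k with hk0 | hk1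
    · subst hk0
      refine ⟨x, hx, ?_⟩
      rw [Finset.filter_eq_empty_iff.mpr (fun y hy => not_lt.mpr (hmax y hy))]
      simp
    · obtain ⟨y, hy, hcnt⟩ := ih hk1 (s.erase x)
        (hinj.mono (by intro z hz; exact Finset.mem_of_mem_erase hz))
        (by rw [Finset.card_erase_of_mem hx]; omega)
      refine ⟨y, Finset.mem_of_mem_erase hy, ?_⟩
      have hfy : f y < f x := by
        have hle := hmax y (Finset.mem_of_mem_erase hy)
        rcases lt_or_eq_of_le hle with h | h
        · exact h
        · exact absurd (hinj (Finset.mem_of_mem_erase hy) hx h)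
            (Finset.ne_of_mem_erase hy)
      have heq : s.filter (fun z => f y < f z) =
          insert x ((s.erase x).filter fun z => f y < f z) := by
        ext z
        simp only [Finset.mem_filter, Finset.mem_insert, Finset.mem_erase]
        constructor
        · rintro ⟨hz, hlt⟩
          rcases eq_or_ne z x with h | h
          · exact Or.inl h
          · exact Or.inr ⟨⟨h, hz⟩, hlt⟩
        · rintro (h | ⟨⟨-, hz⟩, hlt⟩)
          · subst h; exact ⟨hx, hfy⟩
          · exact ⟨hz, hlt⟩
      rw [heq, Finset.card_insert_of_notMem (by simp), hcnt]
      omega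

lemma exists_kth {A : ℕ → ℕ → ℝ} {n k : ℕ} (hA : DistinctEntries A n) (hk : 1 ≤ k)
    {a b : ℕ} (h1 : 1 ≤ a) (h2 : a ≤ b) (h3 : b ≤ n) (hnl : k < 2 * (b - a + 1)) :
    ∃ α β : ℕ, InRange a b (α, β) ∧
      {q | InRange a b q ∧ A α β < A q.1 q.2}.ncard = k - 1 := by
  set s : Finset (ℕ × ℕ) := ({1, 2} : Finset ℕ) ×ˢ Finset.Icc a b with hs
  have hmem : ∀ x : ℕ × ℕ, x ∈ s ↔ InRange a b x := by
    intro x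
    simp [hs, Finset.mem_product, InRange]
  have hcard : s.card = 2 * (b - a + 1) := by
    rw [hs, Finset.card_product, Nat.card_Icc]
    have : ({1, 2} : Finset ℕ).card = 2 := by decide
    rw [this]
    omega
  have hinj : Set.InjOn (fun q : ℕ × ℕ => A q.1 q.2) ↑s := by
    apply hA.mono
    intro x hx
    rw [Finset.mem_coe, hmem] at hx
    obtain ⟨hr, h4, h5⟩ := hx
    exact ⟨hr, by omega, by omega⟩
  obtain ⟨x, hx, hcnt⟩ := exists_rank (fun q : ℕ × ℕ => A q.1 q.2) k hk s hinj (by omega)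
  refine ⟨x.1, x.2, (hmem x).mp hx, ?_⟩
  have : {q | InRange a b q ∧ A x.1 x.2 < A q.1 q.2} =
      ↑(s.filter fun y => A x.1 x.2 < A y.1 y.2) := by
    ext q
    simp only [Set.mem_setOf_eq, Finset.coe_filter, hmem]
  rw [this, Set.ncard_coe_finset]
  exact hcnt

lemma part1 {A : ℕ → ℕ → ℝ} {n k : ℕ} (hA : DistinctEntries A n) (hn : 1 ≤ n)
    (hk : 1 ≤ k) : {p : ℕ × ℕ | IsNode A k n p}.ncard ≤ 6 * k * n := by
  classical
  set Nodes := {p : ℕ × ℕ | IsNode A k n p} with hNodes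
  set N := {p : ℕ × ℕ | IsNode A k n p ∧ k < 2 * (p.2 - p.1 + 1)} with hN
  have hNodesFin : Nodes.Finite := by
    apply Set.Finite.subset (Set.finite_Icc ((1 : ℕ), (1 : ℕ)) (n, n))
    intro p hp
    obtain ⟨i1, i2, i3, -, -⟩ := isNode_inv hn hk hp
    simp only [Set.mem_Icc, Prod.le_def]
    omega
  have hNFin : N.Finite := hNodesFin.subset (fun p hp => hp.1)
  -- bound on N
  have hex : ∀ p : ℕ × ℕ, ∃ ab : ℕ × ℕ, p ∈ N →
      InRange p.1 p.2 ab ∧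
      {q | InRange p.1 p.2 q ∧ A ab.1 ab.2 < A q.1 q.2}.ncard = k - 1 := by
    intro p
    by_cases hp : p ∈ N
    · have hinv := isNode_inv hn hk hp.1
      obtain ⟨α, β, h⟩ := exists_kth hA hk hinv.1 hinv.2.1 hinv.2.2.1 hp.2
      exact ⟨(α, β), fun _ => h⟩
    · exact ⟨(0, 0), fun h => absurd h hp⟩
  choose c hc using hex
  have hTop : ∀ p ∈ N, p ∈ TopPos A n k (c p).1 (c p).2 := by
    intro p hp
    exact ⟨hp.1, hp.2, (hc p hp).1, (hc p hp).2⟩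
  set T : Finset ((ℕ × ℕ) × ℕ) :=
    (({1, 2} : Finset ℕ) ×ˢ Finset.Icc 1 n) ×ˢ Finset.range k with hT
  have hNcard : N.ncard ≤ 2 * n * k := by
    have hmapsto : ∀ p ∈ N, (c p, FF A (c p).1 (c p).2 p) ∈ (↑T : Set ((ℕ × ℕ) × ℕ)) := by
      intro p hp
      obtain ⟨i1, i2, i3, -, -⟩ := isNode_inv hn hk hp.1
      obtain ⟨hr, hb1, hb2⟩ := (hc p hp).1
      simp only [hT, Finset.coe_product, Finset.mem_coe, Finset.mem_product,
        Finset.mem_Icc, Finset.mem_range, Set.mem_prod]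
      refine ⟨⟨?_, by omega, by omega⟩, FF_lt hk (hTop p hp)⟩
      simp only [Finset.mem_insert, Finset.mem_singleton]
      exact hr
    have hinj : Set.InjOn (fun p => (c p, FF A (c p).1 (c p).2 p)) N := by
      intro p hp p' hp' heq
      simp only [Prod.mk.injEq] at heq
      obtain ⟨hc1, hc2⟩ := heq
      have h1 := hTop p hp
      have h2 := hTop p' hp'
      rw [hc1] at h1
      rw [hc1] at hc2
      exact FF_injOn hA hn hk (c p').1 (c p').2 h1 h2 hc2
    have := Set.ncard_le_ncard_of_injOn _ hmapsto hinj T.finite_toSet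
    rw [Set.ncard_coe_finset, hT, Finset.card_product, Finset.card_product,
      Nat.card_Icc, Finset.card_range] at this
    have h2 : ({1, 2} : Finset ℕ).card = 2 := by decide
    rw [h2, Nat.add_sub_cancel] at this
    exact this
  -- cover
  have hcov : Nodes ⊆ insert ((1 : ℕ), n)
      ((fun q : ℕ × ℕ => (q.1, rightCol A k q.1 q.2 - 1)) '' N ∪
       (fun q : ℕ × ℕ => (leftCol A k q.1 q.2 + 1, q.2)) '' N) := by
    intro p hp
    induction hp with
    | root => exact Set.mem_insert _ _
    | @child q p hq hchild ih =>
      rcases hchild.2 with ⟨hp', -⟩ | ⟨hp', -⟩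
      · exact Set.mem_insert_of_mem _ (Or.inl ⟨q, ⟨hq, hchild.1⟩, hp'.symm⟩)
      · exact Set.mem_insert_of_mem _ (Or.inr ⟨q, ⟨hq, hchild.1⟩, hp'.symm⟩)
  have hb1 : ((fun q : ℕ × ℕ => (q.1, rightCol A k q.1 q.2 - 1)) '' N).ncard ≤ N.ncard :=
    Set.ncard_image_le hNFin
  have hb2 : ((fun q : ℕ × ℕ => (leftCol A k q.1 q.2 + 1, q.2)) '' N).ncard ≤ N.ncard :=
    Set.ncard_image_le hNFin
  have hfin2 : ((fun q : ℕ × ℕ => (q.1, rightCol A k q.1 q.2 - 1)) '' N ∪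
       (fun q : ℕ × ℕ => (leftCol A k q.1 q.2 + 1, q.2)) '' N).Finite :=
    (hNFin.image _).union (hNFin.image _)
  have hstep := Set.ncard_le_ncard hcov (hfin2.insert _)
  have hstep2 := Set.ncard_insert_le ((1 : ℕ), n)
    ((fun q : ℕ × ℕ => (q.1, rightCol A k q.1 q.2 - 1)) '' N ∪
       (fun q : ℕ × ℕ => (leftCol A k q.1 q.2 + 1, q.2)) '' N)
  have hstep3 := Set.ncard_union_le
    ((fun q : ℕ × ℕ => (q.1, rightCol A k q.1 q.2 - 1)) '' N)
    ((fun q : ℕ × ℕ => (leftCol A k q.1 q.2 + 1, q.2)) '' N)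
  have hkn : 1 ≤ k * n := Nat.one_le_iff_ne_zero.mpr (by positivity)
  have hcomm : 2 * n * k = 2 * (k * n) := by ring
  rw [hcomm] at hNcard
  have h6 : 6 * k * n = 6 * (k * n) := by ring
  rw [h6]
  omega

/-- `D^k_A` has at most `6kn` nodes; in particular, for each fixed position `(α, β)`,
the number of non-leaf nodes whose `k`-th largest element is located at `(α, β)` is at
most `k`. -/
theorem dag_node_count (A : ℕ → ℕ → ℝ) (n k : ℕ) (hn : 1 ≤ n) (hk : 1 ≤ k)
    (hA : DistinctEntries A n) :
    {p : ℕ × ℕ | IsNode A k n p}.ncard ≤ 6 * k * n ∧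
    ∀ α β : ℕ,
      {p : ℕ × ℕ | IsNode A k n p ∧ k < 2 * (p.2 - p.1 + 1) ∧
        InRange p.1 p.2 (α, β) ∧
        {q | InRange p.1 p.2 q ∧ A α β < A q.1 q.2}.ncard = k - 1}.ncard ≤ k :=
  ⟨part1 hA hn hk, fun α β => part2 hA hn hk α β⟩
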